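/- For every a > 1 and every n ≥ 1, the smallest eigenvalue μ_{n,1} of FᵀF satisfies 2·log a − c₁/n ≤ −(1/n)·log μ_{n,1} ≤ 2·log a + c₂/n, where c₁ = 2·log(a+1) + aπ/(a² − 1) and c₂ = 2·log( a/(a² − 1) ) + 2aπ/(a² − 1). -/

import Mathlib

open Matrix Real

/-- The lower-bidiagonal matrix `F` with `1` on the diagonal and `−a` on the subdiagonal. -/
def Fmat (a : ℝ) (n : ℕ) : Matrix (Fin n) (Fin n) ℝ :=
  fun i j => if (i : ℕ) = (j : ℕ) then 1 else if (i : ℕ) = (j : ℕ) + 1 then -a else 0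

/-- Explicit inverse of `Fmat`. -/
noncomputable def Gmat (a : ℝ) (n : ℕ) : Matrix (Fin n) (Fin n) ℝ :=
  fun i j => if (j : ℕ) ≤ (i : ℕ) then a ^ ((i : ℕ) - (j : ℕ)) else 0

lemma Gmat_mul_Fmat (a : ℝ) (n : ℕ) : Gmat a n * Fmat a n = 1 := by
  ext i k
  rw [Matrix.mul_apply, Matrix.one_apply]
  have hsplit : ∀ j : Fin n, Gmat a n i j * Fmat a n j k
      = (if j = k then Gmat a n i j else 0)
        + (if (j : ℕ) = (k : ℕ) + 1 then Gmat a n i j * (-a) else 0) := by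
    intro j
    simp only [Fmat, Fin.ext_iff]
    rcases eq_or_ne (j : ℕ) (k : ℕ) with h | h
    · have h2 : ¬ (j : ℕ) = (k : ℕ) + 1 := by omega
      simp [h, h2]
    · rcases eq_or_ne (j : ℕ) ((k : ℕ) + 1) with h2 | h2 <;> simp [h, h2]
  rw [Finset.sum_congr rfl fun j _ => hsplit j, Finset.sum_add_distrib,
    Finset.sum_ite_eq' Finset.univ k (fun j => Gmat a n i j)]
  simp only [Finset.mem_univ, if_true]
  by_cases hk : (k : ℕ) + 1 < n
  · have hiff : ∀ j : Fin n, ((j : ℕ) = (k : ℕ) + 1) ↔ j = (⟨(k : ℕ) + 1, hk⟩ : Fin n) := by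
      intro j; rw [Fin.ext_iff]
    simp only [hiff]
    rw [Finset.sum_ite_eq' Finset.univ (⟨(k : ℕ) + 1, hk⟩ : Fin n)
      (fun j => Gmat a n i j * (-a))]
    simp only [Finset.mem_univ, if_true, Gmat, Fin.ext_iff]
    rcases Nat.lt_trichotomy (i : ℕ) (k : ℕ) with h | h | h
    · have h1 : ¬ (k : ℕ) ≤ (i : ℕ) := by omega
      have h2 : ¬ (k : ℕ) + 1 ≤ (i : ℕ) := by omega
      have h3 : ¬ (i : ℕ) = (k : ℕ) := by omega
      simp [h1, h2, h3]
    · have h2 : ¬ (k : ℕ) + 1 ≤ (i : ℕ) := by omega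
      simp [h, h2, le_of_eq h.symm]
    · have h1 : (k : ℕ) ≤ (i : ℕ) := by omega
      have h2 : (k : ℕ) + 1 ≤ (i : ℕ) := by omega
      have h3 : ¬ (i : ℕ) = (k : ℕ) := by omega
      have h4 : (i : ℕ) - (k : ℕ) = ((i : ℕ) - ((k : ℕ) + 1)) + 1 := by omega
      simp only [h1, h2, h3, if_true, if_false]
      rw [h4, pow_succ]
      ring
  · have hz : ∀ j : Fin n, (if (j : ℕ) = (k : ℕ) + 1 then Gmat a n i j * (-a) else 0) = 0 := by
      intro j
      have : ¬ (j : ℕ) = (k : ℕ) + 1 := by have := j.isLt; omega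
      simp [this]
    rw [Finset.sum_congr rfl fun j _ => hz j, Finset.sum_const_zero, add_zero]
    by_cases h : i = k
    · simp [h, Gmat]
    · have h3 : ¬ (i : ℕ) = (k : ℕ) := fun hh => h (Fin.ext hh)
      have h1 : ¬ (k : ℕ) ≤ (i : ℕ) := by have := i.isLt; have := k.isLt; omega
      simp [h, h1, Gmat]

lemma cs_mulVec {n : ℕ} (G : Matrix (Fin n) (Fin n) ℝ) (w : Fin n → ℝ) :
    (G *ᵥ w) ⬝ᵥ (G *ᵥ w) ≤ (∑ i, ∑ j, (G i j) ^ 2) * (w ⬝ᵥ w) := by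
  have h : ∀ i : Fin n, (G *ᵥ w) i * (G *ᵥ w) i ≤ (∑ j, (G i j) ^ 2) * (w ⬝ᵥ w) := by
    intro i
    have h2 := Finset.sum_mul_sq_le_sq_mul_sq Finset.univ (fun j => G i j) w
    have h3 : (G *ᵥ w) i * (G *ᵥ w) i = (∑ j, G i j * w j) ^ 2 := by
      simp [Matrix.mulVec, dotProduct, sq]
    have hw : w ⬝ᵥ w = ∑ j, w j ^ 2 := by simp [dotProduct, sq]
    rw [h3, hw]
    exact h2
  calc (G *ᵥ w) ⬝ᵥ (G *ᵥ w) = ∑ i, (G *ᵥ w) i * (G *ᵥ w) i := rfl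
    _ ≤ ∑ i, (∑ j, (G i j) ^ 2) * (w ⬝ᵥ w) := Finset.sum_le_sum fun i _ => h i
    _ = (∑ i, ∑ j, (G i j) ^ 2) * (w ⬝ᵥ w) := by rw [Finset.sum_mul]

lemma geom_bound (b : ℝ) (hb : 1 < b) (n : ℕ) :
    ∑ i : Fin n, b ^ (i : ℕ) ≤ b ^ n / (b - 1) := by
  rw [Fin.sum_univ_eq_sum_range (fun i => b ^ i) n, geom_sum_eq (by linarith) n]
  have h1 : (0:ℝ) < b - 1 := by linarith
  gcongr
  linarith

lemma geom_bound' (b : ℝ) (hb : 1 < b) (n : ℕ) :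
    ∑ j : Fin n, (1 / b) ^ (j : ℕ) ≤ b / (b - 1) := by
  have hb0 : (0:ℝ) < b := by linarith
  have hr1 : (1:ℝ)/b < 1 := by rw [div_lt_one hb0]; linarith
  have hr0 : (0:ℝ) ≤ 1/b := by positivity
  rw [Fin.sum_univ_eq_sum_range (fun j => (1/b) ^ j) n, geom_sum_eq (ne_of_lt hr1) n]
  have e1 : ((1/b) ^ n - 1) / (1/b - 1) = (1 - (1/b)^n) / (1 - 1/b) := by
    rw [← neg_div_neg_eq]; ring_nf
  rw [e1]
  have h2 : (0:ℝ) < 1 - 1/b := by linarith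
  calc (1 - (1/b)^n) / (1 - 1/b) ≤ 1 / (1 - 1/b) := by
        apply div_le_div_of_nonneg_right ?_ h2.le
        have : (0:ℝ) ≤ (1/b)^n := by positivity
        linarith
  _ = b / (b - 1) := by rw [show 1 - 1/b = (b-1)/b by field_simp, one_div_div]

lemma Gmat_sq_bound (a : ℝ) (ha : 1 < a) (n : ℕ) :
    ∑ i : Fin n, ∑ j : Fin n, (Gmat a n i j) ^ 2 ≤ (a^2) ^ (n+1) / (a^2 - 1) ^ 2 := by
  set b := a ^ 2 with hbdef
  have hb : (1:ℝ) < b := by nlinarith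
  have hb0 : (0:ℝ) < b := by linarith
  have hb1 : (0:ℝ) < b - 1 := by linarith
  have hterm : ∀ i j : Fin n, (Gmat a n i j) ^ 2 ≤ b ^ (i:ℕ) * (1/b) ^ (j:ℕ) := by
    intro i j
    by_cases h : (j:ℕ) ≤ (i:ℕ)
    · have e1 : (Gmat a n i j) ^ 2 = b ^ ((i:ℕ) - (j:ℕ)) := by
        simp [Gmat, h, hbdef, ← pow_mul, mul_comm]
      have e2 : b ^ ((i:ℕ) - (j:ℕ)) * b ^ (j:ℕ) = b ^ (i:ℕ) := by
        rw [← pow_add]; congr 1; omega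
      rw [e1]
      have hbj : (0:ℝ) < b ^ (j:ℕ) := by positivity
      rw [show b ^ (i:ℕ) * (1/b) ^ (j:ℕ) = b ^ (i:ℕ) / b ^ (j:ℕ) by
        rw [div_pow, one_pow]; ring]
      rw [le_div_iff₀ hbj, e2]
    · simp only [Gmat, h, if_false]
      rw [zero_pow (by norm_num : (2:ℕ) ≠ 0)]
      positivity
  calc ∑ i : Fin n, ∑ j : Fin n, (Gmat a n i j) ^ 2
      ≤ ∑ i : Fin n, ∑ j : Fin n, b ^ (i:ℕ) * (1/b) ^ (j:ℕ) :=
        Finset.sum_le_sum fun i _ => Finset.sum_le_sum fun j _ => hterm i j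
    _ = ∑ i : Fin n, b ^ (i:ℕ) * ∑ j : Fin n, (1/b) ^ (j:ℕ) := by
        simp [Finset.mul_sum]
    _ ≤ ∑ i : Fin n, b ^ (i:ℕ) * (b / (b-1)) := by
        refine Finset.sum_le_sum fun i _ => ?_
        have := geom_bound' b hb n
        have hbi : (0:ℝ) ≤ b ^ (i:ℕ) := by positivity
        exact mul_le_mul_of_nonneg_left this hbi
    _ = (∑ i : Fin n, b ^ (i:ℕ)) * (b / (b-1)) := by rw [Finset.sum_mul]
    _ ≤ (b ^ n / (b-1)) * (b / (b-1)) := by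
        refine mul_le_mul_of_nonneg_right (geom_bound b hb n) (by positivity)
    _ = b ^ (n+1) / (b-1) ^ 2 := by
        rw [div_mul_div_comm, ← pow_succ, ← pow_two]

theorem statement17 (a : ℝ) (ha : 1 < a) (n : ℕ) (hn : 1 ≤ n)
    (hM : ((Fmat a n)ᵀ * Fmat a n).IsHermitian)
    -- `μ` enumerates the eigenvalues of `FᵀF` in nondecreasing order
    (μ : Fin n → ℝ) (hμmono : Monotone μ)
    (hμeig : ∃ e : Equiv.Perm (Fin n), μ = hM.eigenvalues ∘ e) :
    2 * Real.log a - (2 * Real.log (a + 1) + a * Real.pi / (a ^ 2 - 1)) / n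
        ≤ -(1 / (n : ℝ)) * Real.log (μ ⟨0, hn⟩) ∧
      -(1 / (n : ℝ)) * Real.log (μ ⟨0, hn⟩)
        ≤ 2 * Real.log a
            + (2 * Real.log (a / (a ^ 2 - 1)) + 2 * a * Real.pi / (a ^ 2 - 1)) / n := by
  obtain ⟨e, he⟩ := hμeig
  set i0 : Fin n := ⟨0, hn⟩ with hi0
  set μ₀ := μ i0 with hμ₀
  have ha0 : (0:ℝ) < a := by linarith
  set b : ℝ := a ^ 2 with hbdef
  have hb : (1:ℝ) < b := by nlinarith
  have hb1 : (0:ℝ) < b - 1 := by linarith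
  have hμ0eq : μ₀ = hM.eigenvalues (e i0) := by rw [hμ₀, he]; rfl
  have hmin : ∀ j : Fin n, μ₀ ≤ hM.eigenvalues j := by
    intro j
    have h1 : i0 ≤ e.symm j := by rw [Fin.le_def]; exact Nat.zero_le _
    have h2 := hμmono h1
    rw [he] at h2
    simpa [hμ0eq] using h2
  -- dot product identity
  have hdot : ∀ x : Fin n → ℝ, x ⬝ᵥ (((Fmat a n)ᵀ * Fmat a n) *ᵥ x)
      = (Fmat a n *ᵥ x) ⬝ᵥ (Fmat a n *ᵥ x) := by
    intro x
    rw [← Matrix.mulVec_mulVec, Matrix.dotProduct_mulVec, Matrix.vecMul_transpose]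
  -- inverse facts
  have hGF := Gmat_mul_Fmat a n
  have hFG : Fmat a n * Gmat a n = 1 := mul_eq_one_comm.mp hGF
  have hGFv : ∀ x : Fin n → ℝ, Gmat a n *ᵥ (Fmat a n *ᵥ x) = x := by
    intro x; rw [Matrix.mulVec_mulVec, hGF, Matrix.one_mulVec]
  -- eigenvector
  set v : Fin n → ℝ := ⇑(hM.eigenvectorBasis (e i0)) with hv
  have hMv : ((Fmat a n)ᵀ * Fmat a n) *ᵥ v = μ₀ • v := by
    rw [hμ0eq]; exact hM.mulVec_eigenvectorBasis (e i0)
  have hv1 : v ⬝ᵥ v = 1 := by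
    have h := hM.eigenvectorBasis.orthonormal.1 (e i0)
    have h2 : @inner ℝ _ _ (hM.eigenvectorBasis (e i0)) (hM.eigenvectorBasis (e i0)) = 1 := by
      rw [real_inner_self_eq_norm_sq, h]; norm_num
    rw [PiLp.inner_apply] at h2
    simpa [dotProduct, RCLike.inner_apply, mul_comm, sq, hv] using h2
  have hray : v ⬝ᵥ (((Fmat a n)ᵀ * Fmat a n) *ᵥ v) = μ₀ := by
    rw [hMv, dotProduct_smul, smul_eq_mul, hv1, mul_one]
  -- the sum of squares of G and its bounds
  set C : ℝ := ∑ i : Fin n, ∑ j : Fin n, (Gmat a n i j) ^ 2 with hC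
  have hCbound : C ≤ b ^ (n+1) / (b - 1) ^ 2 := Gmat_sq_bound a ha n
  have hCpos : (0:ℝ) < C := by
    have h1 : (1:ℝ) = (Gmat a n i0 i0) ^ 2 := by simp [Gmat, hi0]
    have h2 : ∀ i : Fin n, (0:ℝ) ≤ ∑ j : Fin n, (Gmat a n i j) ^ 2 :=
      fun i => Finset.sum_nonneg fun j _ => sq_nonneg _
    have h3 : (Gmat a n i0 i0) ^ 2 ≤ ∑ j : Fin n, (Gmat a n i0 j) ^ 2 :=
      Finset.single_le_sum (f := fun j : Fin n => (Gmat a n i0 j) ^ 2)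
        (fun j _ => sq_nonneg _) (Finset.mem_univ i0)
    have h4 : ∑ j : Fin n, (Gmat a n i0 j) ^ 2 ≤ C :=
      Finset.single_le_sum (fun i _ => h2 i) (Finset.mem_univ i0)
    nlinarith
  -- lower bound for μ₀
  have hlower : 1 ≤ C * μ₀ := by
    have h1 : v ⬝ᵥ v ≤ C * ((Fmat a n *ᵥ v) ⬝ᵥ (Fmat a n *ᵥ v)) := by
      have := cs_mulVec (Gmat a n) (Fmat a n *ᵥ v)
      rwa [hGFv v] at this
    rw [hv1] at h1
    rwa [← hdot, hray] at h1
  have hμ0pos : (0:ℝ) < μ₀ := by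
    rcases lt_or_ge 0 μ₀ with h | h
    · exact h
    · nlinarith
  have hμ0low : (b - 1) ^ 2 / b ^ (n+1) ≤ μ₀ := by
    have hBpos : (0:ℝ) < b ^ (n+1) / (b-1)^2 := by positivity
    have h1 : 1 ≤ (b ^ (n+1) / (b-1)^2) * μ₀ := by
      calc 1 ≤ C * μ₀ := hlower
        _ ≤ (b ^ (n+1) / (b-1)^2) * μ₀ := by
            exact mul_le_mul_of_nonneg_right hCbound hμ0pos.le
    rw [div_le_iff₀ (by positivity : (0:ℝ) < b ^ (n+1))]
    calc (b-1)^2 = (b ^ (n+1) / (b-1)^2)⁻¹ * b ^ (n+1) := by field_simp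
      _ ≤ μ₀ * b ^ (n+1) := by
          apply mul_le_mul_of_nonneg_right _ (by positivity)
          rw [inv_le_iff_one_le_mul₀ hBpos]
          linarith [h1]
  -- PSD of M - μ₀ • 1
  have hpsd : (((Fmat a n)ᵀ * Fmat a n) - μ₀ • (1 : Matrix (Fin n) (Fin n) ℝ)).PosSemidef := by
    have hspec := hM.spectral_theorem
    set U : Matrix (Fin n) (Fin n) ℝ := (hM.eigenvectorUnitary : Matrix (Fin n) (Fin n) ℝ) with hU
    have hUU : U * star U = 1 := (Matrix.mem_unitaryGroup_iff).mp hM.eigenvectorUnitary.2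
    have hdecomp : ((Fmat a n)ᵀ * Fmat a n) - μ₀ • 1
        = U * (Matrix.diagonal fun j => hM.eigenvalues j - μ₀) * star U := by
      have h1 : μ₀ • (1 : Matrix (Fin n) (Fin n) ℝ) = U * (μ₀ • 1) * star U := by
        rw [Matrix.mul_smul, Matrix.mul_one, Matrix.smul_mul, hUU]
      conv_lhs => rw [hspec, Unitary.conjStarAlgAut_apply, h1]
      rw [← Matrix.sub_mul, ← Matrix.mul_sub]
      congr 2
      rw [Matrix.smul_one_eq_diagonal, ← Matrix.diagonal_sub]
      congr 1
    rw [hdecomp, Matrix.star_eq_conjTranspose]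
    exact (Matrix.PosSemidef.diagonal fun j => sub_nonneg.2 (hmin j)).mul_mul_conjTranspose_same U
  -- Rayleigh upper bound with test vector x0
  set x0 : Fin n → ℝ := fun j => a ^ (j : ℕ) with hx0
  have hx0G : x0 = Gmat a n *ᵥ Pi.single i0 (1:ℝ) := by
    funext i
    rw [Matrix.mulVec_single]
    simp [Gmat, hi0, hx0]
  have hFx0 : Fmat a n *ᵥ x0 = Pi.single i0 (1:ℝ) := by
    rw [hx0G, Matrix.mulVec_mulVec, hFG, Matrix.one_mulVec]
  have hray2 : μ₀ * (x0 ⬝ᵥ x0) ≤ 1 := by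
    have h1 := hpsd.dotProduct_mulVec_nonneg x0
    have h2 : star x0 = x0 := rfl
    rw [h2, Matrix.sub_mulVec, dotProduct_sub, Matrix.smul_mulVec,
      Matrix.one_mulVec, dotProduct_smul, smul_eq_mul] at h1
    have h3 : x0 ⬝ᵥ (((Fmat a n)ᵀ * Fmat a n) *ᵥ x0) = 1 := by
      rw [hdot, hFx0]
      simp [dotProduct, Pi.single_apply]
    linarith
  have hS : b ^ (n-1) ≤ x0 ⬝ᵥ x0 := by
    have h1 : x0 ⬝ᵥ x0 = ∑ j : Fin n, b ^ (j:ℕ) := by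
      simp only [dotProduct, hx0]
      exact Finset.sum_congr rfl fun j _ => by rw [← pow_add, ← two_mul, pow_mul]
    rw [h1]
    have hmem : (⟨n-1, by omega⟩ : Fin n) ∈ Finset.univ := Finset.mem_univ _
    have := Finset.single_le_sum (f := fun j : Fin n => b ^ (j:ℕ))
      (fun j _ => by positivity) hmem
    simpa using this
  have hμ0high : μ₀ ≤ (a+1)^2 / b ^ n := by
    have hbn1 : (0:ℝ) < b ^ (n-1) := by positivity
    have h1 : μ₀ * b ^ (n-1) ≤ 1 :=
      le_trans (mul_le_mul_of_nonneg_left hS hμ0pos.le) hray2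
    have h2 : μ₀ ≤ 1 / b ^ (n-1) := by
      rw [le_div_iff₀ hbn1]; exact h1
    have h3 : b ^ n = b ^ (n-1) * b := by
      rw [← pow_succ]; congr 1; omega
    have h4 : (1:ℝ) / b ^ (n-1) = b / b ^ n := by
      rw [h3]; field_simp
    have h5 : b / b ^ n ≤ (a+1)^2 / b ^ n := by
      apply div_le_div_of_nonneg_right _ (by positivity)
      nlinarith
    linarith [h2, h4 ▸ h2]
  -- take logs
  have hn' : (0:ℝ) < n := by exact_mod_cast hn
  have hlogb : Real.log b = 2 * Real.log a := by
    rw [hbdef, Real.log_pow]; push_cast; ring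
  have hloglow : 2 * Real.log (b-1) - (n+1) * Real.log b ≤ Real.log μ₀ := by
    have h1 : Real.log ((b-1)^2 / b^(n+1)) ≤ Real.log μ₀ :=
      Real.log_le_log (by positivity) hμ0low
    rw [Real.log_div (by positivity) (by positivity), Real.log_pow, Real.log_pow] at h1
    push_cast at h1
    linarith
  have hloghigh : Real.log μ₀ ≤ 2 * Real.log (a+1) - n * Real.log b := by
    have h1 : Real.log μ₀ ≤ Real.log ((a+1)^2 / b^n) :=
      Real.log_le_log hμ0pos hμ0high
    rw [Real.log_div (by positivity) (by positivity), Real.log_pow, Real.log_pow] at h1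
    push_cast at h1
    linarith
  have hpi : (0:ℝ) ≤ a * Real.pi / (a^2 - 1) := by
    have := Real.pi_pos
    positivity
  constructor
  · -- lower bound
    have key : 2 * Real.log a * n - (2 * Real.log (a + 1) + a * Real.pi / (a ^ 2 - 1))
        ≤ -Real.log μ₀ := by
      have : Real.log μ₀ ≤ 2 * Real.log (a+1) - n * (2 * Real.log a) := by
        rw [← hlogb]; exact hloghigh
      linarith
    have e1 : 2 * Real.log a - (2 * Real.log (a + 1) + a * Real.pi / (a ^ 2 - 1)) / n
        = (2 * Real.log a * n - (2 * Real.log (a + 1) + a * Real.pi / (a ^ 2 - 1))) / n := by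
      field_simp
    have e2 : -(1 / (n:ℝ)) * Real.log μ₀ = (-Real.log μ₀) / n := by ring
    rw [e1, e2]
    exact div_le_div_of_nonneg_right key hn'.le
  · -- upper bound
    have hlog2 : Real.log (a / (a^2 - 1)) = Real.log a - Real.log (b - 1) := by
      rw [Real.log_div (by positivity) (by nlinarith), hbdef]
    have hpi2 : (0:ℝ) ≤ 2 * a * Real.pi / (a^2 - 1) := by
      have := Real.pi_pos
      positivity
    have key : -Real.log μ₀
        ≤ 2 * Real.log a * n + (2 * Real.log (a / (a^2-1)) + 2 * a * Real.pi / (a^2-1)) := by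
      have h1 : 2 * Real.log (b-1) - (n+1) * (2 * Real.log a) ≤ Real.log μ₀ := by
        rw [← hlogb]; exact hloglow
      rw [hlog2]
      linarith
    have e1 : 2 * Real.log a + (2 * Real.log (a / (a ^ 2 - 1)) + 2 * a * Real.pi / (a ^ 2 - 1)) / n
        = (2 * Real.log a * n + (2 * Real.log (a / (a^2-1)) + 2 * a * Real.pi / (a^2-1))) / n := by
      field_simp
    have e2 : -(1 / (n:ℝ)) * Real.log μ₀ = (-Real.log μ₀) / n := by ring
    rw [e1, e2]
    exact div_le_div_of_nonneg_right key hn'.le
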